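/- Let H be a connected graph such that its line graph L(H) has a cut-vertex. Then H has a cut-edge (bridge). -/

import Mathlib

open SimpleGraph

private lemma step_reach {V : Type*} {H : SimpleGraph V} {x : H.edgeSet}
    (E F : {y : H.edgeSet | y ≠ x}) {a : V}
    (hE : a ∈ (E.1.1 : Sym2 V)) (hF : a ∈ (F.1.1 : Sym2 V)) :
    (H.lineGraph.induce {y | y ≠ x}).Reachable E F := by
  by_cases hEF : E = F
  · exact hEF ▸ Reachable.refl E
  · refine Adj.reachable ?_
    have h1 : (H.lineGraph).Adj E.1 F.1 := by
      rw [lineGraph_adj_iff_exists]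
      exact ⟨fun h => hEF (Subtype.ext h), a, hE, hF⟩
    exact h1

private lemma walk_reach {V : Type*} {H : SimpleGraph V} {x : H.edgeSet}
    {a b : V} (p : (H \ SimpleGraph.fromEdgeSet {(x : Sym2 V)}).Walk a b)
    (E F : {y : H.edgeSet | y ≠ x})
    (hE : a ∈ (E.1.1 : Sym2 V)) (hF : b ∈ (F.1.1 : Sym2 V)) :
    (H.lineGraph.induce {y | y ≠ x}).Reachable E F := by
  induction p generalizing E with
  | nil => exact step_reach E F hE hF
  | @cons a c b h q ih =>
      rw [sdiff_adj, fromEdgeSet_adj] at h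
      obtain ⟨hH, hne⟩ := h
      have hxne : s(a, c) ≠ (x : Sym2 V) := fun hh => hne ⟨hh, hH.ne⟩
      let G : {y : H.edgeSet | y ≠ x} :=
        ⟨⟨s(a, c), (H.mem_edgeSet.mpr hH)⟩, fun hh => hxne (congrArg Subtype.val hh)⟩
      exact (step_reach E G hE (by simp [G])).trans (ih G (by simp [G]) hF)

/-- If the line graph of a connected graph `H` has a cut-vertex, then `H` has a
cut-edge (bridge). -/
theorem stmt19 {V : Type*} (H : SimpleGraph V) (hconn : H.Connected)
    (x : H.edgeSet)
    (hcut : ¬ (H.lineGraph.induce {y | y ≠ x}).Connected) :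
    ∃ e : Sym2 V, H.IsBridge e := by
  refine ⟨(x : Sym2 V), ?_⟩
  by_contra hbr
  apply hcut
  obtain ⟨⟨u, v⟩, hx⟩ := Quot.exists_rep (x : Sym2 V)
  have hx : s(u, v) = (x : Sym2 V) := hx
  have hadj : H.Adj u v := by rw [← mem_edgeSet, hx]; exact x.2
  rw [← hx, isBridge_iff] at hbr
  push_neg at hbr
  have hreach : (H \ SimpleGraph.fromEdgeSet {s(u, v)}).Reachable u v := hbr
  rw [hx] at hreach
  set G' := H \ SimpleGraph.fromEdgeSet {(x : Sym2 V)} with hG'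
  have hstep : ∀ a b, H.Adj a b → G'.Reachable a b := by
    intro a b hab
    by_cases h : s(a, b) = (x : Sym2 V)
    · rw [← hx] at h
      rw [Sym2.eq_iff] at h
      rcases h with ⟨rfl, rfl⟩ | ⟨rfl, rfl⟩
      · exact hreach
      · exact hreach.symm
    · refine Adj.reachable ?_
      rw [hG', sdiff_adj, fromEdgeSet_adj]
      exact ⟨hab, fun hh => h hh.1⟩
  have key : ∀ a b, H.Reachable a b → G'.Reachable a b := by
    intro a b hab
    obtain ⟨p⟩ := hab
    induction p with
    | nil => exact Reachable.refl _
    | cons h q ih => exact (hstep _ _ h).trans ih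
  rw [connected_iff]
  constructor
  · rintro E F
    obtain ⟨⟨a, b⟩, hEab⟩ := Quot.exists_rep (E.1.1 : Sym2 V)
    obtain ⟨⟨c, d⟩, hFcd⟩ := Quot.exists_rep (F.1.1 : Sym2 V)
    have hEab : s(a, b) = (E.1.1 : Sym2 V) := hEab
    have hFcd : s(c, d) = (F.1.1 : Sym2 V) := hFcd
    obtain ⟨p⟩ := key a c (hconn.preconnected a c)
    exact walk_reach p E F (by rw [← hEab]; exact Sym2.mem_mk_left a b)
      (by rw [← hFcd]; exact Sym2.mem_mk_left c d)
  · obtain ⟨p⟩ := hreach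
    cases p with
    | nil => exact absurd rfl hadj.ne
    | @cons _ w _ h q =>
        rw [sdiff_adj, fromEdgeSet_adj] at h
        exact ⟨⟨⟨s(u, w), (H.mem_edgeSet.mpr h.1)⟩,
          fun hh => h.2 ⟨congrArg Subtype.val hh, h.1.ne⟩⟩⟩
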